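/- Let V be a nonempty finite type, let w : V → (0, ∞) be a weight function, and let C ⊆ V be a nonempty subset. Let (U_t)_{t ∈ V} be independent real-valued random variables each distributed according to the standard Gumbel distribution. Then, almost surely, the maximizer over t ∈ C of log(w(t)) + U_t is unique, and for every t₀ ∈ C, the probability that t₀ is this maximizer equals w(t₀) / Σ_{t ∈ C} w(t). -/

import Mathlib

open MeasureTheory ProbabilityTheory

namespace GumbelAux

open Real Set Filter Topology

noncomputable def f (r x : ℝ) : ℝ := exp (-x) * exp (-r * exp (-x))
noncomputable def g (r x : ℝ) : ℝ := (1/r) * exp (-r * exp (-x))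

lemma f_nonneg (r x : ℝ) : 0 ≤ f r x := mul_nonneg (exp_nonneg _) (exp_nonneg _)

lemma hasDerivAt_g (r : ℝ) (hr : r ≠ 0) (x : ℝ) : HasDerivAt (g r) (f r x) x := by
  have h1 : HasDerivAt (fun x : ℝ => -r * exp (-x)) (-r * (exp (-x) * (-1))) x :=
    ((Real.hasDerivAt_exp (-x)).comp x ((hasDerivAt_id x).neg)).const_mul _
  have h2 := (h1.exp).const_mul (1/r)
  refine h2.congr_deriv ?_
  simp only [f]
  field_simp

lemma tendsto_g_atTop (r : ℝ) : Tendsto (g r) atTop (𝓝 (1/r)) := by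
  have h1 : Tendsto (fun x : ℝ => -r * exp (-x)) atTop (𝓝 0) := by
    have := (Real.tendsto_exp_atBot).comp tendsto_neg_atTop_atBot
    have h := this.const_mul (-r)
    rw [mul_zero] at h
    exact h
  have h2 := (Real.continuous_exp.tendsto 0).comp h1
  rw [Real.exp_zero] at h2
  have h3 := h2.const_mul (1/r)
  rw [mul_one] at h3
  exact h3

lemma tendsto_g_atBot (r : ℝ) (hr : 0 < r) : Tendsto (g r) atBot (𝓝 0) := by
  have h2 : Tendsto (fun x : ℝ => exp (-x)) atBot atTop :=
    Real.tendsto_exp_atTop.comp tendsto_neg_atBot_atTop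
  have h1 : Tendsto (fun x : ℝ => -r * exp (-x)) atBot atBot := by
    have h3 : Tendsto (fun x : ℝ => -(r * exp (-x))) atBot atBot :=
      tendsto_neg_atTop_atBot.comp (h2.const_mul_atTop hr)
    exact h3.congr (fun x => (neg_mul r _).symm)
  have h4 := Real.tendsto_exp_atBot.comp h1
  have h5 := h4.const_mul (1/r)
  rw [mul_zero] at h5
  exact h5

lemma continuous_f (r : ℝ) : Continuous (f r) := by unfold f; fun_prop
lemma continuous_g (r : ℝ) : Continuous (g r) := by unfold g; fun_prop

lemma g_nonneg (r x : ℝ) (hr : 0 < r) : 0 ≤ g r x :=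
  mul_nonneg (by positivity) (exp_nonneg _)

lemma g_le (r x : ℝ) (hr : 0 < r) : g r x ≤ 1/r := by
  have h : exp (-r * exp (-x)) ≤ 1 := by
    rw [Real.exp_le_one_iff]
    have : 0 ≤ r * exp (-x) := mul_nonneg hr.le (exp_nonneg _)
    linarith
  calc g r x ≤ (1/r) * 1 := by
        apply mul_le_mul_of_nonneg_left h (by positivity)
    _ = 1/r := mul_one _

lemma integrableOn_Ioi_f (r : ℝ) (hr : 0 < r) (a : ℝ) : IntegrableOn (f r) (Ioi a) :=
  integrableOn_Ioi_deriv_of_nonneg ((continuous_g r).continuousWithinAt)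
    (fun x _ => hasDerivAt_g r hr.ne' x) (fun x _ => f_nonneg r x) (tendsto_g_atTop r)

lemma integral_Ioi_f (r : ℝ) (hr : 0 < r) (a : ℝ) :
    ∫ x in Ioi a, f r x = 1/r - g r a :=
  integral_Ioi_of_hasDerivAt_of_nonneg ((continuous_g r).continuousWithinAt)
    (fun x _ => hasDerivAt_g r hr.ne' x) (fun x _ => f_nonneg r x) (tendsto_g_atTop r)

lemma hasDerivAt_Gneg (r : ℝ) (hr : 0 < r) (y : ℝ) :
    HasDerivAt (fun y : ℝ => -(g r (-y))) (f r (-y)) y := by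
  have h1 : HasDerivAt (fun y : ℝ => g r (-y)) (f r (-y) * (-1)) y :=
    (hasDerivAt_g r hr.ne' (-y)).comp y (hasDerivAt_neg y)
  have h2 := h1.neg
  exact h2.congr_deriv (by ring)

lemma tendsto_Gneg (r : ℝ) (hr : 0 < r) :
    Tendsto (fun y : ℝ => -(g r (-y))) atTop (𝓝 0) := by
  have h := ((tendsto_g_atBot r hr).comp tendsto_neg_atTop_atBot).neg
  simpa using h

lemma integrableOn_Ioi_frefl (r : ℝ) (hr : 0 < r) (a : ℝ) :
    IntegrableOn (fun y : ℝ => f r (-y)) (Ioi a) :=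
  integrableOn_Ioi_deriv_of_nonneg
    (((continuous_g r).comp continuous_neg).neg.continuousWithinAt)
    (fun x _ => hasDerivAt_Gneg r hr x) (fun x _ => f_nonneg r _) (tendsto_Gneg r hr)

lemma integral_Ioi_frefl (r : ℝ) (hr : 0 < r) (a : ℝ) :
    ∫ y in Ioi a, f r (-y) = g r (-a) := by
  have := integral_Ioi_of_hasDerivAt_of_nonneg (a := a) (g' := fun y : ℝ => f r (-y))
    (((continuous_g r).comp continuous_neg).neg.continuousWithinAt)
    (fun x _ => hasDerivAt_Gneg r hr x) (fun x _ => f_nonneg r _) (tendsto_Gneg r hr)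
  rw [this]; simp [Function.comp]

lemma integrableOn_Iic_f (r : ℝ) (hr : 0 < r) (c : ℝ) : IntegrableOn (f r) (Iic c) := by
  rw [← Measure.map_neg_eq_self (volume : Measure ℝ)]
  have m : MeasurableEmbedding fun x : ℝ => -x :=
    (Homeomorph.neg ℝ).isClosedEmbedding.measurableEmbedding
  rw [m.integrableOn_map_iff]
  simp_rw [Function.comp_def, neg_preimage, neg_Iic]
  exact Iff.mpr integrableOn_Ici_iff_integrableOn_Ioi (integrableOn_Ioi_frefl r hr (-c))

lemma integral_Iic_f (r : ℝ) (hr : 0 < r) (c : ℝ) :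
    ∫ x in Iic c, f r x = g r c := by
  have h := integral_comp_neg_Iic c (fun y : ℝ => f r (-y))
  simp only [neg_neg] at h
  rw [h, integral_Ioi_frefl r hr (-c), neg_neg]

lemma lintegral_Iic_f (r : ℝ) (hr : 0 < r) (c : ℝ) :
    ∫⁻ x in Iic c, ENNReal.ofReal (f r x) = ENNReal.ofReal (g r c) := by
  rw [← ofReal_integral_eq_lintegral_ofReal (integrableOn_Iic_f r hr c)
    (Filter.Eventually.of_forall fun x => f_nonneg r x), integral_Iic_f r hr c]

lemma lintegral_f (r : ℝ) (hr : 0 < r) :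
    ∫⁻ x, ENNReal.ofReal (f r x) = ENNReal.ofReal (1/r) := by
  rw [← lintegral_add_compl (fun x => ENNReal.ofReal (f r x)) (measurableSet_Iic (a := (0:ℝ))),
    compl_Iic, lintegral_Iic_f r hr 0,
    ← ofReal_integral_eq_lintegral_ofReal (integrableOn_Ioi_f r hr 0)
      (Filter.Eventually.of_forall fun x => f_nonneg r x),
    integral_Ioi_f r hr 0, ← ENNReal.ofReal_add (g_nonneg r 0 hr) (by linarith [g_le r 0 hr])]
  congr 1
  ring

/-- The law of a random variable with the standard Gumbel CDF is the Gumbel density measure. -/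
lemma map_eq_gumbel {Ω : Type*} [MeasurableSpace Ω] (μ : Measure Ω) [IsProbabilityMeasure μ]
    (X : Ω → ℝ) (hX : Measurable X)
    (h : ∀ x : ℝ, μ {ω | X ω ≤ x} = ENNReal.ofReal (exp (-exp (-x)))) :
    μ.map X = (volume : Measure ℝ).withDensity (fun x => ENNReal.ofReal (f 1 x)) := by
  have hfin : IsProbabilityMeasure (μ.map X) := Measure.isProbabilityMeasure_map hX.aemeasurable
  refine MeasureTheory.Measure.ext_of_Iic (μ.map X) _ (fun a => ?_)
  rw [Measure.map_apply hX measurableSet_Iic, withDensity_apply _ measurableSet_Iic,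
    lintegral_Iic_f 1 one_pos a]
  have h2 : X ⁻¹' (Iic a) = {ω | X ω ≤ a} := rfl
  rw [h2, h a]
  congr 1
  simp [g]

end GumbelAux

open GumbelAux Real Set Filter Topology in
/-- Part 2 of the Gumbel-max trick: the probability that `t₀` is a (weak) maximizer. -/
theorem gumbel_max_prob
    {V : Type*} [Fintype V]
    {Ω : Type*} [MeasurableSpace Ω] (μ : Measure Ω) [IsProbabilityMeasure μ]
    (w : V → ℝ) (hw : ∀ t : V, 0 < w t)
    (C : Finset V)
    (U : V → Ω → ℝ)
    (hUmeas : ∀ t : V, Measurable (U t))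
    (hindep : iIndepFun U μ)
    (hgumbel : ∀ (t : V) (x : ℝ),
      μ {ω | U t ω ≤ x} = ENNReal.ofReal (Real.exp (-Real.exp (-x))))
    (t₀ : V) (ht₀ : t₀ ∈ C) :
    μ {ω | ∀ t' ∈ C, Real.log (w t') + U t' ω ≤ Real.log (w t₀) + U t₀ ω} =
      ENNReal.ofReal (w t₀ / ∑ t ∈ C, w t) := by
  classical
  set s : Finset V := C.erase t₀ with hs
  set c : V → ℝ := fun t' => Real.log (w t₀) - Real.log (w t') with hc
  set q : ℝ := (∑ t' ∈ s, w t') / w t₀ with hq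
  have hq0 : 0 ≤ q := div_nonneg (Finset.sum_nonneg fun t _ => (hw t).le) (hw t₀).le
  have hS : w t₀ + ∑ t' ∈ s, w t' = ∑ t ∈ C, w t := Finset.add_sum_erase C w ht₀
  have hSpos : 0 < ∑ t ∈ C, w t := by
    rw [← hS]
    exact add_pos_of_pos_of_nonneg (hw t₀) (Finset.sum_nonneg fun t _ => (hw t).le)
  -- the tuple of the other coordinates
  set W : Ω → (s → ℝ) := fun ω (i : s) => U i ω with hWdef
  have hW : Measurable W := measurable_pi_lambda _ (fun i => hUmeas i)
  -- independence of `U t₀` and `W`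
  have hST : Disjoint ({t₀} : Finset V) s := by
    simp [hs, Finset.disjoint_singleton_left]
  have hI0 := hindep.indepFun_finset {t₀} s hST hUmeas
  have hgmeas : Measurable (fun h : (({t₀} : Finset V) → ℝ) =>
      h ⟨t₀, Finset.mem_singleton_self t₀⟩) := measurable_pi_apply _
  have hI : IndepFun (U t₀) W μ := hI0.comp hgmeas measurable_id
  -- the target set as a preimage
  set T : Set (ℝ × (s → ℝ)) := {p | ∀ i : s, p.2 i ≤ c i + p.1} with hT
  have hTmeas : MeasurableSet T := by
    have : T = ⋂ i : s, {p : ℝ × (s → ℝ) | p.2 i ≤ c i + p.1} := by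
      ext p; simp [hT, Set.mem_iInter]
    rw [this]
    exact MeasurableSet.iInter fun i => measurableSet_le (by fun_prop) (by fun_prop)
  have hEset : {ω | ∀ t' ∈ C, Real.log (w t') + U t' ω ≤ Real.log (w t₀) + U t₀ ω}
      = (fun ω => (U t₀ ω, W ω)) ⁻¹' T := by
    ext ω
    simp only [Set.mem_setOf_eq, Set.mem_preimage, hT, hWdef]
    constructor
    · intro h i
      have h2 := h i (Finset.mem_of_mem_erase i.2)
      simp only [hc]
      linarith
    · intro h t' ht'
      by_cases he : t' = t₀
      · subst he; exact le_rfl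
      · have h2 := h ⟨t', Finset.mem_erase.mpr ⟨he, ht'⟩⟩
        simp only [hc] at h2
        linarith
  have hmap := (indepFun_iff_map_prod_eq_prod_map_map
    (hUmeas t₀).aemeasurable hW.aemeasurable).mp hI
  rw [hEset, ← Measure.map_apply ((hUmeas t₀).prodMk hW) hTmeas, hmap,
    Measure.prod_apply hTmeas]
  -- compute the slices
  have hslice : ∀ x : ℝ, (μ.map W) (Prod.mk x ⁻¹' T)
      = ENNReal.ofReal (exp (-q * exp (-x))) := by
    intro x
    rw [Measure.map_apply hW (hTmeas.preimage measurable_prodMk_left)]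
    have hpre : W ⁻¹' (Prod.mk x ⁻¹' T) = ⋂ t' ∈ s, U t' ⁻¹' (Iic (c t' + x)) := by
      ext ω
      simp only [Set.mem_preimage, hT, Set.mem_setOf_eq, Set.mem_iInter, Set.mem_Iic, hWdef,
        Subtype.forall]
    rw [hpre, hindep.measure_inter_preimage_eq_mul s
      (sets := fun t' => Iic (c t' + x)) (fun t' _ => measurableSet_Iic)]
    have hterm : ∀ t' ∈ s, μ (U t' ⁻¹' Iic (c t' + x))
        = ENNReal.ofReal (exp (-(w t' / w t₀ * exp (-x)))) := by
      intro t' ht'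
      have : U t' ⁻¹' Iic (c t' + x) = {ω | U t' ω ≤ c t' + x} := rfl
      rw [this, hgumbel t' (c t' + x)]
      have h3 : Real.exp (-(c t' + x)) = w t' / w t₀ * Real.exp (-x) := by
        rw [neg_add, Real.exp_add, hc]
        simp only [neg_sub]
        rw [Real.exp_sub, Real.exp_log (hw t'), Real.exp_log (hw t₀)]
      rw [h3]
    rw [Finset.prod_congr rfl hterm,
      ← ENNReal.ofReal_prod_of_nonneg (fun t' _ => exp_nonneg _), ← Real.exp_sum]
    congr 2
    rw [Finset.sum_neg_distrib, hq, neg_mul]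
    congr 1
    rw [Finset.sum_div, Finset.sum_mul]
  rw [lintegral_congr hslice,
    map_eq_gumbel μ (U t₀) (hUmeas t₀) (hgumbel t₀),
    lintegral_withDensity_eq_lintegral_mul (volume : Measure ℝ)
      ((continuous_f 1).measurable.ennreal_ofReal)
      (g := fun x => ENNReal.ofReal (Real.exp (-q * Real.exp (-x))))
      (Measurable.ennreal_ofReal (by fun_prop))]
  have hcongr : ∀ x : ℝ,
      ((fun x => ENNReal.ofReal (f 1 x)) * fun x => ENNReal.ofReal (exp (-q * exp (-x)))) x
      = ENNReal.ofReal (f (1 + q) x) := by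
    intro x
    simp only [Pi.mul_apply]
    rw [← ENNReal.ofReal_mul (f_nonneg 1 x)]
    congr 1
    simp only [f, one_mul]
    rw [mul_assoc, ← Real.exp_add]
    congr 2
    ring
  rw [lintegral_congr hcongr, lintegral_f (1 + q) (by linarith)]
  congr 1
  have h5 : 1 + q = (∑ t ∈ C, w t) / w t₀ := by
    rw [hq, ← hS, add_div, div_self (hw t₀).ne']
  rw [h5, one_div_div]

/-- the Gumbel-Max trick over a constrained subset. If `(U_t)_{t ∈ V}` are
i.i.d. standard Gumbel random variables and `w : V → (0, ∞)`, then almost surely the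
maximizer over `t ∈ C` of `log (w t) + U t` is unique, and each `t₀ ∈ C` is the maximizer
with probability `w t₀ / Σ_{t ∈ C} w t`. -/

theorem gumbel_max_trick
    {V : Type*} [Fintype V] [Nonempty V]
    {Ω : Type*} [MeasurableSpace Ω] (μ : Measure Ω) [IsProbabilityMeasure μ]
    (w : V → ℝ) (hw : ∀ t : V, 0 < w t)
    (C : Finset V) (hC : C.Nonempty)
    (U : V → Ω → ℝ)
    (hUmeas : ∀ t : V, Measurable (U t))
    -- the `U t` are independent ...
    (hindep : iIndepFun U μ)
    -- ... and each is standard Gumbel distributed (CDF `exp (−exp (−x))`)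
    (hgumbel : ∀ (t : V) (x : ℝ),
      μ {ω | U t ω ≤ x} = ENNReal.ofReal (Real.exp (-Real.exp (-x)))) :
    -- almost surely, the maximizer over `C` of the perturbed log-weight is unique
    (∀ᵐ ω ∂μ, ∃! t : V, t ∈ C ∧
      ∀ t' ∈ C, Real.log (w t') + U t' ω ≤ Real.log (w t) + U t ω) ∧
    -- and each `t₀ ∈ C` is the maximizer with probability `w t₀ / Σ_{t ∈ C} w t`
    (∀ t₀ ∈ C,
      μ {ω | ∀ t' ∈ C, Real.log (w t') + U t' ω ≤ Real.log (w t₀) + U t₀ ω} =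
        ENNReal.ofReal (w t₀ / ∑ t ∈ C, w t)) := by
  classical
  have hprob : ∀ t₀ ∈ C,
      μ {ω | ∀ t' ∈ C, Real.log (w t') + U t' ω ≤ Real.log (w t₀) + U t₀ ω} =
        ENNReal.ofReal (w t₀ / ∑ t ∈ C, w t) :=
    fun t₀ ht₀ => gumbel_max_prob μ w hw C U hUmeas hindep hgumbel t₀ ht₀
  refine ⟨?_, hprob⟩
  set A : V → Set Ω :=
    fun t => {ω | ∀ t' ∈ C, Real.log (w t') + U t' ω ≤ Real.log (w t) + U t ω} with hA
  have hSpos : 0 < ∑ t ∈ C, w t := Finset.sum_pos (fun t _ => hw t) hC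
  have hAmeas : ∀ t, MeasurableSet (A t) := by
    intro t
    have h1 : A t = ⋂ t' ∈ C, {ω | Real.log (w t') + U t' ω ≤ Real.log (w t) + U t ω} := by
      ext ω; simp [hA]
    rw [h1]
    exact MeasurableSet.biInter C.countable_toSet fun t' _ =>
      measurableSet_le (measurable_const.add (hUmeas t')) (measurable_const.add (hUmeas t))
  have hcover : ⋃ t ∈ C, A t = Set.univ := by
    ext ω
    simp only [Set.mem_iUnion, Set.mem_univ, iff_true]
    obtain ⟨t, htC, hmax⟩ := C.exists_max_image (fun t => Real.log (w t) + U t ω) hC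
    exact ⟨t, htC, fun t' ht' => hmax t' ht'⟩
  have hsum : ∑ t ∈ C, μ (A t) = 1 := by
    rw [Finset.sum_congr rfl (fun t ht => hprob t ht),
      ← ENNReal.ofReal_sum_of_nonneg (fun t _ => div_nonneg (hw t).le hSpos.le),
      ← Finset.sum_div, div_self hSpos.ne']
    simp
  have hpair : ∀ p ∈ C, ∀ r ∈ C, p ≠ r → μ (A p ∩ A r) = 0 := by
    intro p hp r hr hne
    have hsub : ⋃ t ∈ C, A t ⊆ (A p \ (A p ∩ A r)) ∪ ⋃ t ∈ C.erase p, A t := by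
      intro ω hω
      simp only [Set.mem_iUnion] at hω
      obtain ⟨t, htC, hωt⟩ := hω
      by_cases htp : t = p
      · subst htp
        by_cases hωr : ω ∈ A r
        · exact Or.inr (Set.mem_iUnion₂.mpr ⟨r, Finset.mem_erase.mpr ⟨hne.symm, hr⟩, hωr⟩)
        · exact Or.inl ⟨hωt, fun hmem => hωr hmem.2⟩
      · exact Or.inr (Set.mem_iUnion₂.mpr ⟨t, Finset.mem_erase.mpr ⟨htp, htC⟩, hωt⟩)
    have h1 : (1 : ENNReal) ≤ μ (A p \ (A p ∩ A r)) + ∑ t ∈ C.erase p, μ (A t) := by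
      calc (1 : ENNReal) = μ (⋃ t ∈ C, A t) := by rw [hcover, measure_univ]
        _ ≤ μ ((A p \ (A p ∩ A r)) ∪ ⋃ t ∈ C.erase p, A t) := measure_mono hsub
        _ ≤ μ (A p \ (A p ∩ A r)) + μ (⋃ t ∈ C.erase p, A t) := measure_union_le _ _
        _ ≤ _ := add_le_add_right (measure_biUnion_finset_le _ _) _
    have hdiff : μ (A p \ (A p ∩ A r)) = μ (A p) - μ (A p ∩ A r) :=
      measure_diff Set.inter_subset_left ((hAmeas p).inter (hAmeas r)).nullMeasurableSet
        (measure_ne_top μ _)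
    have h2 : (1 : ENNReal) + μ (A p ∩ A r) ≤ 1 + 0 := by
      calc (1 : ENNReal) + μ (A p ∩ A r)
          ≤ (μ (A p) - μ (A p ∩ A r)) + ∑ t ∈ C.erase p, μ (A t) + μ (A p ∩ A r) := by
            rw [hdiff] at h1; exact add_le_add_left h1 _
        _ = μ (A p) + ∑ t ∈ C.erase p, μ (A t) := by
            rw [add_right_comm, tsub_add_cancel_of_le (measure_mono Set.inter_subset_left)]
        _ = ∑ t ∈ C, μ (A t) := Finset.add_sum_erase C (fun t => μ (A t)) hp
        _ = 1 := hsum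
        _ = 1 + 0 := (add_zero _).symm
    have h3 := (ENNReal.add_le_add_iff_left ENNReal.one_ne_top).mp h2
    exact le_antisymm h3 zero_le
  have hnull : μ (⋃ p ∈ C, ⋃ r ∈ C.erase p, (A p ∩ A r)) = 0 := by
    refine le_antisymm ?_ zero_le
    calc μ (⋃ p ∈ C, ⋃ r ∈ C.erase p, (A p ∩ A r))
        ≤ ∑ p ∈ C, μ (⋃ r ∈ C.erase p, (A p ∩ A r)) := measure_biUnion_finset_le _ _
      _ ≤ ∑ p ∈ C, ∑ r ∈ C.erase p, μ (A p ∩ A r) :=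
          Finset.sum_le_sum fun p _ => measure_biUnion_finset_le _ _
      _ = 0 := Finset.sum_eq_zero fun p hp => Finset.sum_eq_zero fun r hr =>
          hpair p hp r (Finset.mem_of_mem_erase hr)
            (fun h => (Finset.mem_erase.mp hr).1 h.symm)
  have hae : ∀ᵐ ω ∂μ, ω ∉ ⋃ p ∈ C, ⋃ r ∈ C.erase p, (A p ∩ A r) :=
    (measure_eq_zero_iff_ae_notMem (μ := μ)).mp hnull
  filter_upwards [hae] with ω hω
  obtain ⟨t, htC, hmax⟩ := C.exists_max_image (fun t => Real.log (w t) + U t ω) hC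
  refine ⟨t, ⟨htC, fun t' ht' => hmax t' ht'⟩, ?_⟩
  rintro t' ⟨ht'C, hmax'⟩
  by_contra hne
  exact hω (Set.mem_iUnion₂.mpr ⟨t', ht'C, Set.mem_iUnion₂.mpr
    ⟨t, Finset.mem_erase.mpr ⟨fun h => hne (h ▸ rfl), htC⟩,
      ⟨hmax', fun u hu => hmax u hu⟩⟩⟩)
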